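/- Let (P_k)_{k≥0} be an integer-valued stochastic process with P_0 = 0 such that, conditionally on the past, P(P_{k+1} < P_k − j | history) ≤ (1/10)^{j+1} for all j ≥ −1 (in particular P(P_{k+1} ≤ P_k | history) ≤ 1/10 and P_{k+1} ≤ P_k + 1 always). Then P(P_k ≤ k/2) ≤ (1/10)^{⌊k/10⌋} for all k (more precisely, P(P_k ≤ k/2) decays exponentially in k: there exist C > 0 and c ∈ (0,1) with P(P_k ≤ k/2) ≤ C·c^k). -/

import Mathlib

open MeasureTheory Finset

lemma stmt8_aux {Ω : Type*} {m : MeasurableSpace Ω} {m0 : MeasurableSpace Ω}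
    (hm : m ≤ m0) (μ : Measure Ω) [IsProbabilityMeasure μ]
    {A B : Set Ω} (hA : MeasurableSet[m] A) (hB : MeasurableSet B)
    {r : ℝ}
    (h : ∀ᵐ ω ∂μ, condExp m μ (B.indicator (fun _ => (1:ℝ))) ω ≤ r) :
    (μ (A ∩ B)).toReal ≤ r * (μ A).toReal := by
  have hint : Integrable (B.indicator fun _ => (1:ℝ)) μ :=
    (integrable_const 1).indicator hB
  have h1 : (μ (A ∩ B)).toReal = ∫ ω in A, B.indicator (fun _ => (1:ℝ)) ω ∂μ := by
    rw [setIntegral_indicator hB, setIntegral_const, smul_eq_mul, mul_one, Measure.real]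
  have h2 : ∫ ω in A, B.indicator (fun _ => (1:ℝ)) ω ∂μ
      = ∫ ω in A, condExp m μ (B.indicator (fun _ => (1:ℝ))) ω ∂μ :=
    (setIntegral_condExp hm hint hA).symm
  have h3 : ∫ ω in A, condExp m μ (B.indicator (fun _ => (1:ℝ))) ω ∂μ
      ≤ ∫ ω in A, r ∂μ := by
    refine integral_mono_ae integrable_condExp.integrableOn
      integrableOn_const ?_
    exact ae_restrict_of_ae h
  have h4 : ∫ _ω in A, r ∂μ = (μ A).toReal * r := by
    rw [setIntegral_const, smul_eq_mul, Measure.real]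
  rw [h1, h2]
  rw [h4] at h3
  linarith

theorem stmt_8 {Ω : Type*} {m0 : MeasurableSpace Ω} (μ : MeasureTheory.Measure Ω)
    [MeasureTheory.IsProbabilityMeasure μ]
    (F : MeasureTheory.Filtration ℕ m0)
    (P : ℕ → Ω → ℤ)
    (hadapted : MeasureTheory.Adapted F P)
    (h0 : ∀ ω, P 0 ω = 0)
    (hstep : ∀ᵐ ω ∂μ, ∀ k, P (k + 1) ω ≤ P k ω + 1)
    (hcond : ∀ k : ℕ, ∀ j : ℕ, ∀ᵐ ω ∂μ,
      MeasureTheory.condExp (F k) μ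
        (Set.indicator {ω' | P (k + 1) ω' ≤ P k ω' - j} (fun _ => (1:ℝ))) ω
        ≤ (1 / 10 : ℝ) ^ (j + 1)) :
    ∃ C > (0:ℝ), ∃ c ∈ Set.Ioo (0:ℝ) 1, ∀ k : ℕ,
      (μ {ω | (P k ω : ℝ) ≤ (k : ℝ) / 2}).toReal ≤ C * c ^ k := by
  classical
  set G : Set Ω := {ω | ∀ i, P (i+1) ω ≤ P i ω + 1} with hGdef
  have hGc : μ Gᶜ = 0 := by
    have := ae_iff.mp hstep
    simpa [hGdef, Set.compl_setOf] using this
  have hPle : ∀ ω ∈ G, ∀ k, P k ω ≤ (k : ℤ) := by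
    intro ω hω k
    induction k with
    | zero => simp [h0 ω]
    | succ k ih =>
      have := hω k
      push_cast
      omega
  have hmeasP : ∀ k, Measurable (P k) :=
    fun k => (hadapted k).mono (F.le k) le_rfl
  set E : ℕ → ℕ → Set Ω := fun k n => {ω | P k ω ≤ (k:ℤ) - (n:ℤ)} with hEdef
  set D : ℕ → ℕ → Set Ω := fun k t => {ω | P (k+1) ω ≤ P k ω + 1 - (t:ℤ)} with hDdef
  have hEmeas : ∀ k n, MeasurableSet[F k] (E k n) := by
    intro k n
    exact (hadapted k) (measurableSet_Iic : MeasurableSet (Set.Iic ((k:ℤ) - (n:ℤ))))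
  have hmono : ∀ {s t : Set Ω}, s ⊆ t → (μ s).toReal ≤ (μ t).toReal :=
    fun h => ENNReal.toReal_mono (measure_ne_top μ _) (measure_mono h)
  -- conditional tail bound, integrated over F k measurable sets
  have hterm : ∀ k n j : ℕ,
      (μ (E k n ∩ D k (j+1))).toReal ≤ (1/10:ℝ)^(j+1) * (μ (E k n)).toReal := by
    intro k n j
    have hDeq : D k (j+1) = {ω' | P (k + 1) ω' ≤ P k ω' - (j:ℤ)} := by
      ext ω
      simp only [hDdef, Set.mem_setOf_eq]
      push_cast
      omega
    rw [hDeq]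
    refine stmt8_aux (F.le k) μ (hEmeas k n) ?_ (hcond k j)
    exact measurableSet_le (hmeasP (k+1)) ((hmeasP k).sub measurable_const)
  -- main recursion
  have key : ∀ k n : ℕ, (μ (E k n)).toReal ≤ 2^(n+k) * (1/10:ℝ)^n := by
    intro k
    induction k with
    | zero =>
      intro n
      cases n with
      | zero =>
        have h1 : μ (E 0 0) ≤ 1 := prob_le_one
        have := ENNReal.toReal_mono ENNReal.one_ne_top h1
        simpa using this
      | succ n =>
        have hE : E 0 (n+1) = ∅ := by
          ext ω
          simp [hEdef, h0 ω]
          omega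
        rw [hE]
        simp only [measure_empty, ENNReal.toReal_zero]
        positivity
    | succ k ih =>
      intro n
      -- inclusion
      have hsub : E (k+1) n ⊆ Gᶜ ∪ ⋃ t ∈ Finset.range (n+1), (E k (n - t) ∩ D k t) := by
        intro ω hω
        by_cases hωG : ω ∈ G
        · right
          have hstep' := hωG k
          have hd0 : (0:ℤ) ≤ P k ω + 1 - P (k+1) ω := by omega
          set d : ℕ := (P k ω + 1 - P (k+1) ω).toNat with hddef
          have hd : (d:ℤ) = P k ω + 1 - P (k+1) ω := Int.toNat_of_nonneg hd0
          have hPk : P k ω ≤ (k:ℤ) := hPle ω hωG k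
          have hω' : P (k+1) ω ≤ ((k:ℤ)+1) - (n:ℤ) := by
            have := hω
            simp only [hEdef, Set.mem_setOf_eq] at this
            push_cast at this ⊢
            omega
          refine Set.mem_biUnion (Finset.mem_range.mpr (Nat.lt_succ_of_le (min_le_right d n))) ?_
          constructor
          · simp only [hEdef, Set.mem_setOf_eq]
            have hcast : ((n - min d n : ℕ) : ℤ) = (n:ℤ) - (min d n : ℕ) := by
              have : min d n ≤ n := min_le_right d n
              push_cast [this]
              omega
            rw [hcast]
            have hmin : ((min d n : ℕ) : ℤ) = min (d:ℤ) (n:ℤ) := by push_cast; omega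
            omega
          · simp only [hDdef, Set.mem_setOf_eq]
            have hmin : ((min d n : ℕ) : ℤ) = min (d:ℤ) (n:ℤ) := by push_cast; omega
            omega
        · left; exact hωG
      have hchain : μ (E (k+1) n) ≤ ∑ t ∈ Finset.range (n+1), μ (E k (n - t) ∩ D k t) := by
        calc μ (E (k+1) n) ≤ μ (Gᶜ ∪ ⋃ t ∈ Finset.range (n+1), (E k (n - t) ∩ D k t)) :=
              measure_mono hsub
          _ ≤ μ Gᶜ + μ (⋃ t ∈ Finset.range (n+1), (E k (n - t) ∩ D k t)) := measure_union_le _ _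
          _ = μ (⋃ t ∈ Finset.range (n+1), (E k (n - t) ∩ D k t)) := by rw [hGc, zero_add]
          _ ≤ ∑ t ∈ Finset.range (n+1), μ (E k (n - t) ∩ D k t) :=
              measure_biUnion_finset_le _ _
      have h5 : (μ (E (k+1) n)).toReal
          ≤ ∑ t ∈ Finset.range (n+1), (μ (E k (n - t) ∩ D k t)).toReal := by
        calc (μ (E (k+1) n)).toReal
            ≤ (∑ t ∈ Finset.range (n+1), μ (E k (n - t) ∩ D k t)).toReal :=
              ENNReal.toReal_mono (by
                refine (ENNReal.sum_lt_top.mpr ?_).ne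
                intro t _
                exact measure_lt_top _ _) hchain
          _ = ∑ t ∈ Finset.range (n+1), (μ (E k (n - t) ∩ D k t)).toReal :=
              ENNReal.toReal_sum (fun t _ => measure_ne_top μ _)
      -- per-term bound
      have hterm2 : ∀ t ∈ Finset.range (n+1),
          (μ (E k (n - t) ∩ D k t)).toReal ≤ 2^(n+k) * (1/10:ℝ)^n * (1/2:ℝ)^t := by
        intro t ht
        have htn : t ≤ n := Nat.lt_succ_iff.mp (Finset.mem_range.mp ht)
        cases t with
        | zero =>
          have : (μ (E k (n - 0) ∩ D k 0)).toReal ≤ (μ (E k n)).toReal := by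
            apply hmono
            simp only [Nat.sub_zero]
            exact Set.inter_subset_left
          calc (μ (E k (n - 0) ∩ D k 0)).toReal ≤ (μ (E k n)).toReal := this
            _ ≤ 2^(n+k) * (1/10:ℝ)^n := ih n
            _ = 2^(n+k) * (1/10:ℝ)^n * (1/2:ℝ)^0 := by ring
        | succ j =>
          have h1 := hterm k (n - (j+1)) j
          have h2 := ih (n - (j+1))
          have hEnn : (0:ℝ) ≤ (μ (E k (n - (j+1)))).toReal := ENNReal.toReal_nonneg
          have hr : (0:ℝ) ≤ (1/10:ℝ)^(j+1) := by positivity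
          have hkey : (1/10:ℝ)^(j+1) * (2^((n-(j+1))+k) * (1/10:ℝ)^(n-(j+1)))
              = 2^(n+k) * (1/10:ℝ)^n * (1/2:ℝ)^(j+1) := by
            have e1 : (1/10:ℝ)^(j+1) * (1/10:ℝ)^(n-(j+1)) = (1/10:ℝ)^n := by
              rw [← pow_add]; congr 1; omega
            have e2 : (2:ℝ)^((n-(j+1))+k) * 2^(j+1) = 2^(n+k) := by
              rw [← pow_add]; congr 1; omega
            have h2pos : (0:ℝ) < 2^(j+1) := by positivity
            have e2' : (2:ℝ)^((n-(j+1))+k) = 2^(n+k) * (1/2)^(j+1) := by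
              have hinv : ((1:ℝ)/2)^(j+1) = ((2:ℝ)^(j+1))⁻¹ := by
                rw [one_div, inv_pow]
              rw [hinv]
              field_simp
              linarith [e2]
            rw [e2', ← e1]
            ring
          calc (μ (E k (n - (j+1)) ∩ D k (j+1))).toReal
              ≤ (1/10:ℝ)^(j+1) * (μ (E k (n - (j+1)))).toReal := h1
            _ ≤ (1/10:ℝ)^(j+1) * (2^((n-(j+1))+k) * (1/10:ℝ)^(n-(j+1))) := by
                apply mul_le_mul_of_nonneg_left h2 hr
            _ = 2^(n+k) * (1/10:ℝ)^n * (1/2:ℝ)^(j+1) := hkey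
      have hgeom : ∑ t ∈ Finset.range (n+1), ((1:ℝ)/2)^t ≤ 2 := by
        have h := geom_sum_eq (show ((1:ℝ)/2) ≠ 1 by norm_num) (n+1)
        rw [h]
        have : (0:ℝ) ≤ (1/2:ℝ)^(n+1) := by positivity
        have h2 : ((1:ℝ)/2)^(n+1) ≤ 1 := pow_le_one₀ (by norm_num) (by norm_num)
        rw [div_le_iff_of_neg (by norm_num : ((1:ℝ)/2 - 1) < 0)]
        linarith
      calc (μ (E (k+1) n)).toReal
          ≤ ∑ t ∈ Finset.range (n+1), (μ (E k (n - t) ∩ D k t)).toReal := h5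
        _ ≤ ∑ t ∈ Finset.range (n+1), 2^(n+k) * (1/10:ℝ)^n * (1/2:ℝ)^t :=
            Finset.sum_le_sum hterm2
        _ = 2^(n+k) * (1/10:ℝ)^n * ∑ t ∈ Finset.range (n+1), ((1:ℝ)/2)^t := by
            rw [Finset.mul_sum]
        _ ≤ 2^(n+k) * (1/10:ℝ)^n * 2 := by
            apply mul_le_mul_of_nonneg_left hgeom
            positivity
        _ = 2^(n+(k+1)) * (1/10:ℝ)^n := by
            have hnk : n+(k+1) = (n+k)+1 := by omega
            rw [hnk, pow_succ]
            ring
  -- conclusion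
  refine ⟨1, one_pos, 2 / Real.sqrt 5, ⟨by positivity, ?_⟩, ?_⟩
  · rw [div_lt_one (by positivity)]
    nlinarith [Real.sq_sqrt (show (0:ℝ) ≤ 5 by norm_num), Real.sqrt_nonneg 5]
  · intro k
    set n : ℕ := k - k/2 with hndef
    have hsub : {ω | (P k ω : ℝ) ≤ (k:ℝ)/2} ⊆ E k n := by
      intro ω hω
      simp only [Set.mem_setOf_eq] at hω
      have h2 : (2 * P k ω : ℝ) ≤ (k:ℝ) := by linarith
      have h3 : 2 * P k ω ≤ (k:ℤ) := by exact_mod_cast h2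
      simp only [hEdef, Set.mem_setOf_eq]
      omega
    have hb := key k n
    have hsqrt5 : (0:ℝ) < Real.sqrt 5 := Real.sqrt_pos.mpr (by norm_num)
    have hsq : Real.sqrt 5 ^ 2 = 5 := Real.sq_sqrt (by norm_num)
    have hle : (2:ℝ)^(n+k) * (1/10:ℝ)^n ≤ (2 / Real.sqrt 5)^k := by
      have e1 : (2:ℝ)^(n+k) * (1/10:ℝ)^n = 2^k * (1/5:ℝ)^n := by
        rw [pow_add, mul_comm ((2:ℝ)^n) _, mul_assoc, ← mul_pow]
        norm_num
      have e2 : ((1:ℝ)/5)^n = (1/Real.sqrt 5)^(2*n) := by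
        rw [pow_mul]
        congr 1
        rw [div_pow, one_pow, hsq]
      have e3 : (1/Real.sqrt 5:ℝ)^(2*n) ≤ (1/Real.sqrt 5)^k := by
        apply pow_le_pow_of_le_one (by positivity)
        · rw [div_le_one hsqrt5]
          nlinarith
        · omega
      have e4 : (2 / Real.sqrt 5 : ℝ)^k = 2^k * (1/Real.sqrt 5)^k := by
        rw [div_pow, one_div, inv_pow, div_eq_mul_inv]
      rw [e1, e2, e4]
      exact mul_le_mul_of_nonneg_left e3 (by positivity)
    calc (μ {ω | (P k ω : ℝ) ≤ (k:ℝ)/2}).toReal ≤ (μ (E k n)).toReal := hmono hsub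
      _ ≤ 2^(n+k) * (1/10:ℝ)^n := hb
      _ ≤ (2 / Real.sqrt 5)^k := hle
      _ = 1 * (2 / Real.sqrt 5)^k := (one_mul _).symm
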